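/- If v is a balanced vertex of degree 4 in a geodesic net in ℝ², then the four incident edges form two straight lines through v: the four outward unit tangent vectors can be partitioned into two pairs of opposite vectors. -/

import Mathlib

/-- At a balanced vertex of degree 4 in a geodesic net in ℝ², the four pairwise
distinct outward unit tangent vectors split into two pairs of opposite vectors
(the four edges form two straight lines through the vertex). -/
theorem balanced_degree_four_two_lines (u : Fin 4 → EuclideanSpace ℝ (Fin 2))
    (hu : ∀ i, ‖u i‖ = 1) (hinj : Function.Injective u)
    (hsum : ∑ i, u i = 0) :
    (u 0 = -u 1 ∧ u 2 = -u 3) ∨ (u 0 = -u 2 ∧ u 1 = -u 3) ∨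
      (u 0 = -u 3 ∧ u 1 = -u 2) := by
  set z : Fin 4 → ℂ := fun i => ⟨u i 0, u i 1⟩ with hz
  -- each z i is a unit complex number
  have hnorm : ∀ i, Complex.normSq (z i) = 1 := by
    intro i
    have h := hu i
    rw [EuclideanSpace.norm_eq] at h
    have h2 : ∑ j, ‖u i j‖ ^ 2 = 1 := by
      have hnn : (0:ℝ) ≤ ∑ j, ‖u i j‖ ^ 2 :=
        Finset.sum_nonneg fun j _ => sq_nonneg _
      nlinarith [Real.sq_sqrt hnn, h]
    rw [Fin.sum_univ_two] at h2
    simp only [hz, Complex.normSq_mk, Real.norm_eq_abs, sq_abs] at h2 ⊢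
    nlinarith [h2]
  have hz0 : ∀ i, z i ≠ 0 := by
    intro i hi
    have := hnorm i
    rw [hi] at this
    simp at this
  have hconj : ∀ i, (starRingEnd ℂ) (z i) = (z i)⁻¹ := by
    intro i
    have : (starRingEnd ℂ) (z i) * z i = 1 := by
      rw [← Complex.normSq_eq_conj_mul_self, hnorm i]
      norm_num
    exact eq_inv_of_mul_eq_one_left this
  -- coordinatewise sums are zero
  have hcoord : ∀ j : Fin 2, ∑ i, u i j = 0 := by
    intro j
    have := congrFun (congrArg WithLp.ofLp hsum) j
    simpa [WithLp.ofLp_sum, Finset.sum_apply] using this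
  have hzsum : z 0 + z 1 + z 2 + z 3 = 0 := by
    apply Complex.ext
    · have := hcoord 0
      rw [Fin.sum_univ_four] at this
      simpa [hz] using this
    · have := hcoord 1
      rw [Fin.sum_univ_four] at this
      simpa [hz] using this
  have hinvsum : (z 0)⁻¹ + (z 1)⁻¹ + (z 2)⁻¹ + (z 3)⁻¹ = 0 := by
    rw [← hconj 0, ← hconj 1, ← hconj 2, ← hconj 3, ← map_add, ← map_add, ← map_add,
      hzsum, map_zero]
  have h3 : z 1 * z 2 * z 3 + z 0 * z 2 * z 3 + z 0 * z 1 * z 3 + z 0 * z 1 * z 2 = 0 := by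
    field_simp [hz0 0, hz0 1, hz0 2, hz0 3] at hinvsum
    linear_combination hinvsum
  have hprod : (z 0 + z 1) * ((z 0 + z 2) * (z 0 + z 3)) = 0 := by
    linear_combination (z 0) ^ 2 * hzsum + h3
  -- translate complex equalities back to EuclideanSpace
  have back : ∀ i j, z i + z j = 0 → u i = -u j := by
    intro i j hij
    have hre : u i 0 + u j 0 = 0 := congrArg Complex.re hij
    have him : u i 1 + u j 1 = 0 := congrArg Complex.im hij
    ext k
    fin_cases k
    · show u i 0 = (-u j) 0
      have : (-u j) 0 = -(u j 0) := rfl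
      rw [this]; linarith
    · show u i 1 = (-u j) 1
      have : (-u j) 1 = -(u j 1) := rfl
      rw [this]; linarith
  rcases mul_eq_zero.mp hprod with h01 | h'
  · left
    refine ⟨back 0 1 h01, back 2 3 ?_⟩
    linear_combination hzsum - h01
  · rcases mul_eq_zero.mp h' with h02 | h03
    · right; left
      refine ⟨back 0 2 h02, back 1 3 ?_⟩
      linear_combination hzsum - h02
    · right; right
      refine ⟨back 0 3 h03, back 1 2 ?_⟩
      linear_combination hzsum - h03
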